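/- Let r ≥ 3. For every ε > 0 there exists N such that for all n ≥ N, every family F of subsets of [n] = {1,…,n} containing no 1-focal family of size r satisfies |F| ≤ (1 + (r−2)/(r−1)^{(r−1)/(r−2)} + ε)^n. -/

import Mathlib

/-- A family consisting of a focus set `A₀` and `m` further sets `As 0, …, As (m-1)`
(viewed as subsets of `[n]`, i.e. characteristic vectors in `{0,1}^n`) is *1-focal with
focus `A₀`* if for every `i ∈ A₀`, at most one of the sets `As j` misses `i`
(equivalently, at least `m - 1` of the `m` characteristic-vector entries equal `1`). -/
def IsOneFocalWithFocus {n m : ℕ} (A₀ : Finset (Fin n)) (As : Fin m → Finset (Fin n)) : Prop :=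
  ∀ i ∈ A₀, ∀ j j' : Fin m, i ∉ As j → i ∉ As j' → j = j'

/-- A family `F` of subsets of `[n]` contains a 1-focal family of size `r` if some `r`
distinct members `A₀, As 0, …, As (r-2)` of `F` are 1-focal with focus `A₀`. -/
def ContainsOneFocalFamily {n : ℕ} (F : Finset (Finset (Fin n))) (r : ℕ) : Prop :=
  ∃ A₀ ∈ F, ∃ As : Fin (r - 1) → Finset (Fin n),
    (∀ j, As j ∈ F) ∧ Function.Injective As ∧ (∀ j, As j ≠ A₀) ∧ IsOneFocalWithFocus A₀ As

namespace OneFocalProof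

variable {n : ℕ}

/-- lists of `s` pairwise disjoint `q`-element subsets of `X` -/
def DT (q : ℕ) : ℕ → Finset (Fin n) → Finset (List (Finset (Fin n)))
  | 0, _ => {[]}
  | s + 1, X => (X.powersetCard q).biUnion fun Q => (DT q s (X \ Q)).image (Q :: ·)

/-- the cardinality of `DT q s X` as a function of `X.card` -/
def g (q : ℕ) : ℕ → ℕ → ℕ
  | 0, _ => 1
  | s + 1, b => b.choose q * g q s (b - q)

lemma mem_DT {q s : ℕ} {X : Finset (Fin n)} {L : List (Finset (Fin n))} :
    L ∈ DT q s X ↔ L.length = s ∧ (∀ Q ∈ L, Q ∈ X.powersetCard q) ∧ L.Pairwise Disjoint := by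
  induction s generalizing X L with
  | zero =>
    simp only [DT, Finset.mem_singleton]
    constructor
    · rintro rfl; simp
    · rintro ⟨h, -, -⟩; exact List.length_eq_zero_iff.mp h
  | succ s ih =>
    simp only [DT, Finset.mem_biUnion, Finset.mem_image]
    constructor
    · rintro ⟨Q, hQ, M, hM, rfl⟩
      obtain ⟨hlen, hmem, hpw⟩ := ih.mp hM
      obtain ⟨hQX, hQc⟩ := Finset.mem_powersetCard.mp hQ
      refine ⟨by simp [hlen], ?_, ?_⟩
      · intro R hR
        rcases List.mem_cons.mp hR with rfl | hR
        · exact hQ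
        · obtain ⟨h1, h2⟩ := Finset.mem_powersetCard.mp (hmem R hR)
          exact Finset.mem_powersetCard.mpr ⟨h1.trans (Finset.sdiff_subset), h2⟩
      · refine List.Pairwise.cons ?_ hpw
        intro R hR
        have hRX := (Finset.mem_powersetCard.mp (hmem R hR)).1
        exact Finset.disjoint_of_subset_right hRX disjoint_sdiff_self_right
    · rintro ⟨hlen, hmem, hpw⟩
      match L with
      | [] => simp at hlen
      | Q :: M =>
        have hQ : Q ∈ X.powersetCard q := hmem Q List.mem_cons_self
        obtain ⟨hdisj, hpwM⟩ := List.pairwise_cons.mp hpw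
        refine ⟨Q, hQ, M, ih.mpr ⟨by simpa using hlen, ?_, hpwM⟩, rfl⟩
        intro R hR
        obtain ⟨h1, h2⟩ := Finset.mem_powersetCard.mp (hmem R (List.mem_cons_of_mem Q hR))
        exact Finset.mem_powersetCard.mpr
          ⟨Finset.subset_sdiff.mpr ⟨h1, (hdisj R hR).symm⟩, h2⟩

lemma card_DT (q : ℕ) : ∀ (s : ℕ) (X : Finset (Fin n)), (DT q s X).card = g q s X.card
  | 0, X => by simp [DT, g]
  | s + 1, X => by
    rw [DT, Finset.card_biUnion, g]
    · have h : ∀ Q ∈ X.powersetCard q,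
          ((DT q s (X \ Q)).image (Q :: ·)).card = g q s (X.card - q) := by
        intro Q hQ
        obtain ⟨h1, h2⟩ := Finset.mem_powersetCard.mp hQ
        rw [Finset.card_image_of_injective _ (fun a b h => by injection h), card_DT q s,
          Finset.card_sdiff_of_subset h1, h2]
      rw [Finset.sum_congr rfl h, Finset.sum_const, Finset.card_powersetCard, smul_eq_mul]
    · intro Q hQ Q' hQ' hne
      simp only [Finset.disjoint_left, Finset.mem_image]
      rintro L ⟨M, hM, rfl⟩ ⟨M', hM', hE⟩
      injection hE with h1 h2
      exact hne h1.symm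

lemma g_pos (q : ℕ) : ∀ (s b : ℕ), s * q ≤ b → 0 < g q s b
  | 0, b, _ => Nat.one_pos
  | s + 1, b, h => by
    rw [g]
    have he : (s + 1) * q = s * q + q := by ring
    have hq : q ≤ b := by omega
    exact Nat.mul_pos (Nat.choose_pos hq) (g_pos q s (b - q) (by omega))

lemma mem_of_getElem? {α : Type*} {l : List α} {j : ℕ} {a : α} (h : l[j]? = some a) : a ∈ l := by
  obtain ⟨hlt, he⟩ := List.getElem?_eq_some_iff.mp h
  exact he ▸ List.getElem_mem hlt


lemma card_slice (q : ℕ) : ∀ (j s : ℕ), j < s → ∀ (X Q : Finset (Fin n)), Q ∈ X.powersetCard q →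
    ((DT q s X).filter (fun L => L[j]? = some Q)).card = g q (s - 1) (X.card - q) := by
  intro j
  induction j with
  | zero =>
    rintro (_ | s) hs X Q hQ
    · omega
    · have himg : ((DT q (s+1) X).filter (fun L => L[0]? = some Q))
          = (DT q s (X \ Q)).image (Q :: ·) := by
        ext L
        simp only [Finset.mem_filter, Finset.mem_image, DT, Finset.mem_biUnion]
        constructor
        · rintro ⟨⟨Q', hQ', M, hM, rfl⟩, h0⟩
          simp only [List.getElem?_cons_zero, Option.some.injEq] at h0
          subst h0
          exact ⟨M, hM, rfl⟩
        · rintro ⟨M, hM, rfl⟩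
          exact ⟨⟨Q, hQ, M, hM, rfl⟩, by simp⟩
      obtain ⟨h1, h2⟩ := Finset.mem_powersetCard.mp hQ
      rw [himg, Finset.card_image_of_injective _ (fun a b h => by injection h), card_DT,
        Finset.card_sdiff_of_subset h1, h2]
      rfl
  | succ j ih =>
    rintro (_ | s) hs X Q hQ
    · omega
    · have hjs : j < s := by omega
      obtain ⟨hQX, hQc⟩ := Finset.mem_powersetCard.mp hQ
      have hdisjU : ∀ Q1 ∈ X.powersetCard q, ∀ Q2 ∈ X.powersetCard q, Q1 ≠ Q2 →
          Disjoint (((DT q s (X \ Q1)).image (Q1 :: ·)).filter (fun L => L[j+1]? = some Q))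
            (((DT q s (X \ Q2)).image (Q2 :: ·)).filter (fun L => L[j+1]? = some Q)) := by
        intro Q1 h1 Q2 h2 hne
        apply Finset.disjoint_filter_filter
        simp only [Finset.disjoint_left, Finset.mem_image]
        rintro L ⟨M, hM, rfl⟩ ⟨M', hM', hE⟩
        injection hE with hh _
        exact hne hh.symm
      rw [show DT q (s+1) X = (X.powersetCard q).biUnion
            fun Q' => (DT q s (X \ Q')).image (Q' :: ·) from rfl,
        Finset.filter_biUnion, Finset.card_biUnion hdisjU]
      have hpiece : ∀ Q' ∈ X.powersetCard q,
          (((DT q s (X \ Q')).image (Q' :: ·)).filter (fun L => L[j+1]? = some Q)).card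
          = if Q' ∈ (X \ Q).powersetCard q then g q (s - 1) ((X.card - q) - q) else 0 := by
        intro Q' hQ'
        obtain ⟨hQ'X, hQ'c⟩ := Finset.mem_powersetCard.mp hQ'
        have himg2 : ((DT q s (X \ Q')).image (Q' :: ·)).filter (fun L => L[j+1]? = some Q)
            = ((DT q s (X \ Q')).filter (fun M => M[j]? = some Q)).image (Q' :: ·) := by
          ext L
          simp only [Finset.mem_filter, Finset.mem_image]
          constructor
          · rintro ⟨⟨M, hM, rfl⟩, hj2⟩
            exact ⟨M, ⟨hM, by simpa using hj2⟩, rfl⟩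
          · rintro ⟨M, ⟨hM, hj2⟩, rfl⟩
            exact ⟨⟨M, hM, rfl⟩, by simpa using hj2⟩
        rw [himg2, Finset.card_image_of_injective _ (fun a b h => by injection h)]
        by_cases hd : Q' ∈ (X \ Q).powersetCard q
        · rw [if_pos hd]
          have hdisj : Disjoint Q' Q := (Finset.subset_sdiff.mp (Finset.mem_powersetCard.mp hd).1).2
          have hQin : Q ∈ (X \ Q').powersetCard q :=
            Finset.mem_powersetCard.mpr ⟨Finset.subset_sdiff.mpr ⟨hQX, hdisj.symm⟩, hQc⟩
          rw [ih s hjs (X \ Q') Q hQin, Finset.card_sdiff_of_subset hQ'X, hQ'c]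
        · rw [if_neg hd, Finset.card_eq_zero, Finset.filter_eq_empty_iff]
          intro M hM hj2
          have hQmem : Q ∈ M := mem_of_getElem? hj2
          have hQpc := (mem_DT.mp hM).2.1 Q hQmem
          obtain ⟨hsub, _⟩ := Finset.mem_powersetCard.mp hQpc
          obtain ⟨hQX2, hdisj⟩ := Finset.subset_sdiff.mp hsub
          exact hd (Finset.mem_powersetCard.mpr ⟨Finset.subset_sdiff.mpr ⟨hQ'X, hdisj.symm⟩, hQ'c⟩)
      rw [Finset.sum_congr rfl hpiece, Finset.sum_ite_mem]
      have hset : X.powersetCard q ∩ (X \ Q).powersetCard q = (X \ Q).powersetCard q :=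
        Finset.inter_eq_right.mpr (Finset.powersetCard_mono Finset.sdiff_subset)
      rw [hset, Finset.sum_const, Finset.card_powersetCard, Finset.card_sdiff_of_subset hQX, hQc, smul_eq_mul]
      obtain ⟨s', rfl⟩ : ∃ s', s = s' + 1 := ⟨s - 1, by omega⟩
      simp [g]



lemma exists_own {r : ℕ} (hr : 3 ≤ r) {F : Finset (Finset (Fin n))}
    (hF : ¬ ContainsOneFocalFamily F r) {A : Finset (Fin n)} (hA : A ∈ F)
    {L : List (Finset (Fin n))} (hL : L ∈ DT (A.card / (r-1)) (r-1) A) :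
    ∃ j < r - 1, ∃ S ∈ (A.powersetCard (A.card - A.card / (r-1))).filter
      (fun S => (F.filter (fun B => S ⊆ B)).card ≤ r - 1), L[j]? = some (A \ S) := by
  obtain ⟨hlen, hmem, hpw⟩ := mem_DT.mp hL
  by_contra hcon
  push_neg at hcon
  apply hF
  have hlenj : ∀ j : Fin (r-1), (j : ℕ) < L.length := fun j => by rw [hlen]; exact j.2
  have hQfpc : ∀ j : Fin (r-1), L[(j:ℕ)]'(hlenj j) ∈ A.powersetCard (A.card / (r-1)) :=
    fun j => hmem _ (List.getElem_mem _)
  have hQfsub : ∀ j : Fin (r-1), L[(j:ℕ)]'(hlenj j) ⊆ A := fun j => (Finset.mem_powersetCard.mp (hQfpc j)).1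
  have hQfcard : ∀ j : Fin (r-1), (L[(j:ℕ)]'(hlenj j)).card = A.card / (r-1) :=
    fun j => (Finset.mem_powersetCard.mp (hQfpc j)).2
  have hbad : ∀ j : Fin (r-1),
      r - 1 + 1 ≤ (F.filter (fun B => A \ L[(j:ℕ)]'(hlenj j) ⊆ B)).card := by
    intro j
    by_contra hle
    push_neg at hle
    have hSin : A \ L[(j:ℕ)]'(hlenj j) ∈ (A.powersetCard (A.card - A.card / (r-1))).filter
        (fun S => (F.filter (fun B => S ⊆ B)).card ≤ r - 1) := by
      refine Finset.mem_filter.mpr ⟨Finset.mem_powersetCard.mpr ⟨Finset.sdiff_subset, ?_⟩,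
        by omega⟩
      rw [Finset.card_sdiff_of_subset (hQfsub j), hQfcard j]
    refine hcon (j:ℕ) j.2 (A \ L[(j:ℕ)]'(hlenj j)) hSin ?_
    rw [Finset.sdiff_sdiff_eq_self (hQfsub j)]
    exact List.getElem?_eq_getElem (hlenj j)
  have hts : ∀ j : Fin (r-1),
      r - 1 ≤ ((F.filter (fun B => A \ L[(j:ℕ)]'(hlenj j) ⊆ B)).erase A).card := by
    intro j
    have hAmem : A ∈ F.filter (fun B => A \ L[(j:ℕ)]'(hlenj j) ⊆ B) :=
      Finset.mem_filter.mpr ⟨hA, Finset.sdiff_subset⟩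
    have := hbad j
    rw [Finset.card_erase_of_mem hAmem]
    omega
  have hall : ∀ s : Finset (Fin (r-1)),
      s.card ≤ (s.biUnion (fun j => (F.filter (fun B => A \ L[(j:ℕ)]'(hlenj j) ⊆ B)).erase A)).card := by
    intro s
    rcases s.eq_empty_or_nonempty with rfl | ⟨j, hj⟩
    · simp
    · calc s.card ≤ Fintype.card (Fin (r-1)) := by
            simpa using Finset.card_le_univ s
        _ = r - 1 := Fintype.card_fin _
        _ ≤ _ := hts j
        _ ≤ _ := Finset.card_le_card (Finset.subset_biUnion_of_mem
            (fun j : Fin (r-1) => (F.filter (fun B => A \ L[(j:ℕ)]'(hlenj j) ⊆ B)).erase A) hj)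
  obtain ⟨f, hfinj, hf⟩ := (Finset.all_card_le_biUnion_card_iff_exists_injective _).mp hall
  refine ⟨A, hA, f, fun j => (Finset.mem_filter.mp (Finset.mem_of_mem_erase (hf j))).1, hfinj,
    fun j => (Finset.mem_erase.mp (hf j)).1, ?_⟩
  intro i hi j j' hij hij'
  have key : ∀ j0 : Fin (r-1), i ∉ f j0 → i ∈ L[(j0:ℕ)]'(hlenj j0) := by
    intro j0 hnot
    by_contra hiq
    have hsub : A \ L[(j0:ℕ)]'(hlenj j0) ⊆ f j0 :=
      (Finset.mem_filter.mp (Finset.mem_of_mem_erase (hf j0))).2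
    exact hnot (hsub (Finset.mem_sdiff.mpr ⟨hi, hiq⟩))
  have h1 := key j hij
  have h2 := key j' hij'
  by_contra hne
  have hvne : (j : ℕ) ≠ (j' : ℕ) := fun h => hne (Fin.ext h)
  have hdisj : Disjoint (L[(j:ℕ)]'(hlenj j)) (L[(j':ℕ)]'(hlenj j')) := by
    rcases hvne.lt_or_gt with h | h
    · exact List.pairwise_iff_getElem.mp hpw _ _ (hlenj j) (hlenj j') h
    · exact (List.pairwise_iff_getElem.mp hpw _ _ (hlenj j') (hlenj j) h).symm
  exact (Finset.disjoint_left.mp hdisj h1) h2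

lemma own_bound {r : ℕ} (hr : 3 ≤ r) {F : Finset (Finset (Fin n))}
    (hF : ¬ ContainsOneFocalFamily F r) {A : Finset (Fin n)} (hA : A ∈ F) :
    A.card.choose (A.card / (r-1)) ≤ (r-1) *
      ((A.powersetCard (A.card - A.card / (r-1))).filter
        (fun S => (F.filter (fun B => S ⊆ B)).card ≤ r - 1)).card := by
  have hqa : A.card / (r-1) ≤ A.card := Nat.div_le_self _ _
  have ht2 : 2 ≤ r - 1 := by omega
  have hcover : DT (A.card / (r-1)) (r-1) A ⊆
      (Finset.range (r-1) ×ˢ ((A.powersetCard (A.card - A.card / (r-1))).filter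
        (fun S => (F.filter (fun B => S ⊆ B)).card ≤ r - 1))).biUnion
      (fun p => (DT (A.card / (r-1)) (r-1) A).filter (fun L => L[p.1]? = some (A \ p.2))) := by
    intro L hL
    obtain ⟨j, hj, S, hS, hjS⟩ := exists_own hr hF hA hL
    exact Finset.mem_biUnion.mpr ⟨(j, S), Finset.mem_product.mpr ⟨Finset.mem_range.mpr hj, hS⟩,
      Finset.mem_filter.mpr ⟨hL, hjS⟩⟩
  have hGpos : 0 < g (A.card / (r-1)) (r-1-1) (A.card - A.card / (r-1)) := by
    apply g_pos
    have h1 : A.card / (r-1) * (r-1) ≤ A.card := Nat.div_mul_le_self _ _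
    have h2 : (r-1-1) * (A.card / (r-1)) + A.card / (r-1) = A.card / (r-1) * (r-1) := by
      have h3 : r - 1 - 1 + 1 = r - 1 := by omega
      calc (r-1-1) * (A.card / (r-1)) + A.card / (r-1) = (r-1-1+1) * (A.card / (r-1)) := by ring
        _ = A.card / (r-1) * (r-1) := by rw [h3, mul_comm]
    omega
  have hL1 : A.card.choose (A.card / (r-1)) * g (A.card / (r-1)) (r-1-1) (A.card - A.card / (r-1))
      ≤ ((r-1) * ((A.powersetCard (A.card - A.card / (r-1))).filter
        (fun S => (F.filter (fun B => S ⊆ B)).card ≤ r - 1)).card)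
        * g (A.card / (r-1)) (r-1-1) (A.card - A.card / (r-1)) := by
    calc A.card.choose (A.card / (r-1)) * g (A.card / (r-1)) (r-1-1) (A.card - A.card / (r-1))
        = g (A.card / (r-1)) (r-1) A.card := by
          obtain ⟨t', ht'⟩ : ∃ t', r - 1 = t' + 1 := ⟨r - 2, by omega⟩
          rw [ht']; simp [g]
      _ = (DT (A.card / (r-1)) (r-1) A).card := (card_DT _ _ _).symm
      _ ≤ ∑ p ∈ Finset.range (r-1) ×ˢ ((A.powersetCard (A.card - A.card / (r-1))).filter
            (fun S => (F.filter (fun B => S ⊆ B)).card ≤ r - 1)),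
            ((DT (A.card / (r-1)) (r-1) A).filter (fun L => L[p.1]? = some (A \ p.2))).card :=
          le_trans (Finset.card_le_card hcover) Finset.card_biUnion_le
      _ = ∑ _p ∈ Finset.range (r-1) ×ˢ ((A.powersetCard (A.card - A.card / (r-1))).filter
            (fun S => (F.filter (fun B => S ⊆ B)).card ≤ r - 1)),
            g (A.card / (r-1)) (r-1-1) (A.card - A.card / (r-1)) := by
          apply Finset.sum_congr rfl
          rintro ⟨j, S⟩ hp
          obtain ⟨hj, hS⟩ := Finset.mem_product.mp hp
          obtain ⟨hSpc, _⟩ := Finset.mem_filter.mp hS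
          obtain ⟨hSA, hSc⟩ := Finset.mem_powersetCard.mp hSpc
          have hAS : A \ S ∈ A.powersetCard (A.card / (r-1)) := by
            refine Finset.mem_powersetCard.mpr ⟨Finset.sdiff_subset, ?_⟩
            rw [Finset.card_sdiff_of_subset hSA, hSc]
            exact Nat.sub_sub_self hqa
          exact card_slice _ j (r-1) (Finset.mem_range.mp hj) A (A \ S) hAS
      _ = _ := by
          rw [Finset.sum_const, Finset.card_product, Finset.card_range, smul_eq_mul, mul_assoc]
  exact Nat.le_of_mul_le_mul_right hL1 hGpos


lemma class_bound {r : ℕ} (hr : 3 ≤ r) {F : Finset (Finset (Fin n))}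
    (hF : ¬ ContainsOneFocalFamily F r) (a : ℕ) :
    (F.filter (fun A => A.card = a)).card * a.choose (a / (r-1)) ≤
      (r-1) * ((r-1) * n.choose (a - a / (r-1))) := by
  classical
  set m := a - a / (r-1) with hm
  set Fa := F.filter (fun A => A.card = a) with hFa
  set OwnP := fun S : Finset (Fin n) => (F.filter (fun B => S ⊆ B)).card ≤ r - 1 with hOwnP
  have step1 : Fa.card * a.choose (a / (r-1)) ≤
      (r-1) * ∑ A ∈ Fa, ((A.powersetCard m).filter OwnP).card := by
    rw [Finset.mul_sum]
    calc Fa.card * a.choose (a / (r-1)) = ∑ _A ∈ Fa, a.choose (a / (r-1)) := by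
          rw [Finset.sum_const, smul_eq_mul]
      _ ≤ ∑ A ∈ Fa, (r-1) * ((A.powersetCard m).filter OwnP).card := by
          apply Finset.sum_le_sum
          intro A hA
          obtain ⟨hAF, hAc⟩ := Finset.mem_filter.mp hA
          have hob := own_bound hr hF hAF
          rw [hAc] at hob
          exact hob
  have step2 : ∑ A ∈ Fa, ((A.powersetCard m).filter OwnP).card ≤ (r-1) * n.choose m := by
    have hrw : ∀ A ∈ Fa, ((A.powersetCard m).filter OwnP).card =
        ∑ S ∈ (Finset.univ : Finset (Fin n)).powersetCard m,
          (if S ∈ (A.powersetCard m).filter OwnP then 1 else 0) := by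
      intro A _hA
      rw [← Finset.card_filter, Finset.filter_mem_eq_inter,
        Finset.inter_eq_right.mpr
          ((Finset.filter_subset OwnP _).trans
            (Finset.powersetCard_mono (Finset.subset_univ A)))]
    calc ∑ A ∈ Fa, ((A.powersetCard m).filter OwnP).card
        = ∑ A ∈ Fa, ∑ S ∈ (Finset.univ : Finset (Fin n)).powersetCard m,
            (if S ∈ (A.powersetCard m).filter OwnP then 1 else 0) :=
          Finset.sum_congr rfl hrw
      _ = ∑ S ∈ (Finset.univ : Finset (Fin n)).powersetCard m,
            ∑ A ∈ Fa, (if S ∈ (A.powersetCard m).filter OwnP then 1 else 0) :=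
          Finset.sum_comm
      _ ≤ ∑ _S ∈ (Finset.univ : Finset (Fin n)).powersetCard m, (r-1) := by
          apply Finset.sum_le_sum
          intro S _hS
          rw [← Finset.card_filter]
          rcases (Fa.filter (fun A => S ∈ (A.powersetCard m).filter OwnP)).eq_empty_or_nonempty
            with he | ⟨A0, hA0⟩
          · rw [he]; simp
          · obtain ⟨_hA0Fa, hA0S⟩ := Finset.mem_filter.mp hA0
            obtain ⟨_, hOwn0⟩ := Finset.mem_filter.mp hA0S
            have hsub : Fa.filter (fun A => S ∈ (A.powersetCard m).filter OwnP) ⊆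
                F.filter (fun B => S ⊆ B) := by
              intro A hA
              obtain ⟨hAFa, hAS⟩ := Finset.mem_filter.mp hA
              obtain ⟨hApc, _⟩ := Finset.mem_filter.mp hAS
              exact Finset.mem_filter.mpr ⟨(Finset.mem_filter.mp hAFa).1,
                (Finset.mem_powersetCard.mp hApc).1⟩
            exact le_trans (Finset.card_le_card hsub) hOwn0
      _ = (r-1) * n.choose m := by
          rw [Finset.sum_const, Finset.card_powersetCard, smul_eq_mul, mul_comm]
          congr 1
          rw [Finset.card_univ, Fintype.card_fin]
  calc Fa.card * a.choose (a / (r-1)) ≤ (r-1) * ∑ A ∈ Fa, ((A.powersetCard m).filter OwnP).card :=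
        step1
    _ ≤ (r-1) * ((r-1) * n.choose m) := Nat.mul_le_mul_left _ step2

/-- the central term of the `k`-weighted binomial sum is within factor `a+1` of the whole sum -/
lemma star (k a : ℕ) (hk : 1 ≤ k) :
    (k + 1) ^ a ≤ (a + 1) * (a.choose (a - a / (k + 1)) * k ^ (a - a / (k + 1))) := by
  set t := k + 1 with htdef
  set d := a / t with hddef
  set m := a - d with hmdef
  have htpos : 0 < t := Nat.succ_pos k
  have hdm : t * d + a % t = a := Nat.div_add_mod a t
  have hmod : a % t < t := Nat.mod_lt a htpos
  have hda : d ≤ a := Nat.div_le_self a t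
  have htd : t * d = k * d + d := by rw [htdef]; ring
  clear_value t d m
  have hup : ∀ j, j < m → j + 1 ≤ k * (a - j) := by
    intro j hj
    have h1 : d + 1 ≤ a - j := by omega
    have h2 : k * (d + 1) ≤ k * (a - j) := Nat.mul_le_mul_left k h1
    have h4 : j + 1 ≤ k * d + k := by omega
    calc j + 1 ≤ k * d + k := h4
      _ = k * (d + 1) := by ring
      _ ≤ k * (a - j) := h2
  have hdown : ∀ j, m ≤ j → k * (a - j) ≤ j + 1 := by
    intro j hj
    have h1 : a - j ≤ d := by omega
    have h2 : k * (a - j) ≤ k * d := Nat.mul_le_mul_left k h1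
    have h5 : k * d ≤ j + 1 := by omega
    exact le_trans h2 h5
  have hstep_up : ∀ j, j < m → a.choose j * k ^ j ≤ a.choose (j+1) * k ^ (j+1) := by
    intro j hj
    have h1 := hup j hj
    have hkey := Nat.choose_succ_right_eq a j
    refine Nat.le_of_mul_le_mul_right ?_ (Nat.succ_pos j)
    calc a.choose j * k ^ j * (j + 1)
        ≤ a.choose j * k ^ j * (k * (a - j)) := by
          exact Nat.mul_le_mul_left _ h1
      _ = (a.choose j * (a - j)) * k ^ (j+1) := by ring
      _ = (a.choose (j+1) * (j+1)) * k ^ (j+1) := by rw [hkey]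
      _ = a.choose (j+1) * k ^ (j+1) * (j+1) := by ring
  have hstep_down : ∀ j, m ≤ j → a.choose (j+1) * k ^ (j+1) ≤ a.choose j * k ^ j := by
    intro j hj
    have h1 := hdown j hj
    have hkey := Nat.choose_succ_right_eq a j
    refine Nat.le_of_mul_le_mul_right ?_ (Nat.succ_pos j)
    calc a.choose (j+1) * k ^ (j+1) * (j + 1)
        = (a.choose (j+1) * (j+1)) * k ^ (j+1) := by ring
      _ = (a.choose j * (a - j)) * k ^ (j+1) := by rw [hkey]
      _ = a.choose j * k ^ j * (k * (a - j)) := by ring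
      _ ≤ a.choose j * k ^ j * (j + 1) := Nat.mul_le_mul_left _ h1
  have hup2 : ∀ d' i, i + d' = m → a.choose i * k ^ i ≤ a.choose m * k ^ m := by
    intro d'
    induction d' with
    | zero => intro i h; rw [show i = m by omega]
    | succ d'' ih =>
      intro i h
      exact le_trans (hstep_up i (by omega)) (ih (i+1) (by omega))
  have hdown2 : ∀ d', a.choose (m + d') * k ^ (m + d') ≤ a.choose m * k ^ m := by
    intro d'
    induction d' with
    | zero => exact le_refl _
    | succ d'' ih =>
      have := hstep_down (m + d'') (by omega)
      rw [show m + (d'' + 1) = (m + d'') + 1 by omega]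
      exact le_trans this ih
  have hmax : ∀ i, a.choose i * k ^ i ≤ a.choose m * k ^ m := by
    intro i
    rcases le_or_gt i m with h | h
    · exact hup2 (m - i) i (by omega)
    · have := hdown2 (i - m)
      rwa [show m + (i - m) = i by omega] at this
  calc t ^ a = ∑ i ∈ Finset.range (a+1), k ^ i * 1 ^ (a - i) * (a.choose i) := by
        rw [htdef, add_pow]
        norm_num
      _ = ∑ i ∈ Finset.range (a+1), a.choose i * k ^ i := by
        apply Finset.sum_congr rfl
        intro i _
        ring
      _ ≤ ∑ _i ∈ Finset.range (a+1), a.choose m * k ^ m :=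
        Finset.sum_le_sum (fun i _ => hmax i)
      _ = (a+1) * (a.choose m * k ^ m) := by
        rw [Finset.sum_const, Finset.card_range, smul_eq_mul]


lemma choose_mul_pow_le {x : ℝ} (hx : 0 ≤ x) (N m : ℕ) (h : m ≤ N) :
    (N.choose m : ℝ) * x ^ m ≤ (1 + x) ^ N := by
  rw [show (1:ℝ) + x = x + 1 by ring, add_pow]
  calc (N.choose m:ℝ) * x^m = x^m * 1^(N-m) * (N.choose m) := by ring
    _ ≤ ∑ i ∈ Finset.range (N+1), x^i * 1^(N-i) * (N.choose i) :=
      Finset.single_le_sum (f := fun i => x^i * 1^(N-i) * (N.choose i))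
        (fun i _ => by positivity) (Finset.mem_range.mpr (by omega))

lemma exp_key {r a : ℕ} (hr : 3 ≤ r) : (r-1) * (a - a/(r-1)) ≤ (r-2) * (a + (r-1)) := by
  set t := r - 1 with htdef
  set k := r - 2 with hkdef
  have hkt : t = k + 1 := by omega
  set d := a / t with hddef
  have htpos : 0 < t := by omega
  have hdm : t * d + a % t = a := Nat.div_add_mod a t
  have hmod : a % t < t := Nat.mod_lt a htpos
  have hda : d ≤ a := Nat.div_le_self a t
  have h1 : t * (a - d) + t * d = t * a := by
    rw [← Nat.mul_add]
    congr 1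
    omega
  have h2 : t * a = k * a + a := by rw [hkt]; ring
  have h3 : k * (a + t) = k * a + k * t := by ring
  have h4 : t ≤ k * t := Nat.le_mul_of_pos_left t (by omega)
  clear_value t k d
  omega

lemma main_bound {r : ℕ} (hr : 3 ≤ r) {n : ℕ} {F : Finset (Finset (Fin n))}
    (hF : ¬ ContainsOneFocalFamily F r) :
    (F.card : ℝ) ≤ ((n:ℝ)+1)^2 * ((r:ℝ)-1)^(r+1) *
      (1 + ((r:ℝ)-2) / ((r:ℝ)-1) ^ (((r:ℝ)-1)/((r:ℝ)-2)))^n := by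
  classical
  set T : ℝ := (r:ℝ) - 1 with hTdef
  set K : ℝ := (r:ℝ) - 2 with hKdef
  set E : ℝ := T ^ (T/K) with hEdef
  set x : ℝ := K / E with hxdef
  have hr3 : (3:ℝ) ≤ (r:ℝ) := by exact_mod_cast hr
  have hK1 : (1:ℝ) ≤ K := by rw [hKdef]; linarith
  have hT2 : (2:ℝ) ≤ T := by rw [hTdef]; linarith
  have hT0 : (0:ℝ) < T := by linarith
  have hK0 : (0:ℝ) < K := by linarith
  have hE0 : (0:ℝ) < E := Real.rpow_pos_of_pos hT0 _
  have hx0 : (0:ℝ) < x := div_pos hK0 hE0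
  have hTcast : ((r-1:ℕ):ℝ) = T := by
    rw [hTdef, Nat.cast_sub (by omega : 1 ≤ r)]
    norm_num
  have hKcast : ((r-2:ℕ):ℝ) = K := by
    rw [hKdef, Nat.cast_sub (by omega : 2 ≤ r)]
    norm_num
  -- per-size-class bound
  have hclassR : ∀ a : ℕ, a ≤ n →
      ((F.filter (fun A => A.card = a)).card : ℝ) ≤ T^(r+1) * ((n:ℝ)+1) *(1+x)^n := by
    intro a ha
    set q := a / (r-1) with hqdef
    set m := a - q with hmdef
    have hqa : q ≤ a := Nat.div_le_self a (r-1)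
    have hma : m ≤ a := Nat.sub_le a q
    have hmn : m ≤ n := le_trans hma ha
    have hsymm : a.choose m = a.choose q := by
      rw [hmdef]
      exact Nat.choose_symm hqa
    -- ℕ facts
    have hclass := class_bound hr hF a
    have hstar := star (r-2) a (by omega)
    rw [show r - 2 + 1 = r - 1 by omega] at hstar
    -- hstar : (r-1)^a ≤ (a+1) * (a.choose m * (r-2)^m)
    have hkey := exp_key (a := a) hr
    -- real versions
    have hcq0 : 0 < a.choose q := Nat.choose_pos hqa
    have hcq1 : (1:ℝ) ≤ (a.choose q : ℝ) := by exact_mod_cast hcq0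
    rw [← hqdef, ← hmdef] at hclass hstar hkey
    have hclass' : ((F.filter (fun A => A.card = a)).card : ℝ) * (a.choose q:ℝ)
        ≤ T * (T * (n.choose m:ℝ)) := by
      have h0 := (Nat.cast_le (α := ℝ)).mpr hclass
      push_cast at h0
      rw [hTcast] at h0
      exact h0
    have hstar' : T^a ≤ ((a:ℝ)+1) * ((a.choose m:ℝ) * K^m) := by
      have h0 := (Nat.cast_le (α := ℝ)).mpr hstar
      push_cast at h0
      rw [hTcast, hKcast] at h0
      exact h0
    have hkey' : T * (m:ℝ) ≤ K * ((a:ℝ) + T) := by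
      have h0 := (Nat.cast_le (α := ℝ)).mpr hkey
      push_cast at h0
      rw [hTcast, hKcast] at h0
      exact h0
    have hexp2 : (T/K) * (m:ℝ) ≤ (a:ℝ) + T := by
      rw [div_mul_eq_mul_div, div_le_iff₀ hK0]
      calc T * (m:ℝ) ≤ K * ((a:ℝ) + T) := hkey'
        _ = ((a:ℝ) + T) * K := by ring
    have hEm : E^m ≤ T^a * T^(r-1) := by
      have e1 : E^m = T ^ ((T/K) * (m:ℝ)) := by
        rw [hEdef, ← Real.rpow_natCast (T ^ (T/K)) m, ← Real.rpow_mul hT0.le]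
      have e2 : T ^ ((T/K)*(m:ℝ)) ≤ T ^ ((a:ℝ) + T) :=
        Real.rpow_le_rpow_of_exponent_le (by linarith) hexp2
      have e3 : T ^ ((a:ℝ) + T) = T^a * T^(r-1) := by
        rw [← hTcast, show (a:ℝ) + ((r-1:ℕ):ℝ) = ((a + (r-1) : ℕ):ℝ) by push_cast; ring,
          Real.rpow_natCast, pow_add]
      rw [e1]
      exact e2.trans (le_of_eq e3)
    have hbin : ((n.choose m:ℝ)) * x^m ≤ (1+x)^n := choose_mul_pow_le hx0.le n m hmn
    have hA : ((F.filter (fun A => A.card = a)).card : ℝ) * ((a.choose q:ℝ) * x^m)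
        ≤ T^2 * (1+x)^n := by
      calc ((F.filter (fun A => A.card = a)).card : ℝ) * ((a.choose q:ℝ) * x^m)
          = (((F.filter (fun A => A.card = a)).card : ℝ) * (a.choose q:ℝ)) * x^m := by ring
        _ ≤ (T * (T * (n.choose m:ℝ))) * x^m :=
            mul_le_mul_of_nonneg_right hclass' (pow_nonneg hx0.le m)
        _ = T^2 * ((n.choose m:ℝ) * x^m) := by ring
        _ ≤ T^2 * (1+x)^n := mul_le_mul_of_nonneg_left hbin (by positivity)
    have hB : (1:ℝ) ≤ T^(r-1) * (((a:ℝ)+1) * ((a.choose q:ℝ) * x^m)) := by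
      have hxm : x^m = K^m / E^m := div_pow K E m
      have hchoose_eq : (a.choose m : ℝ) = (a.choose q : ℝ) := by exact_mod_cast hsymm
      have hZ : E^m ≤ T^(r-1) * (((a:ℝ)+1) * ((a.choose q:ℝ) * K^m)) := by
        calc E^m ≤ T^a * T^(r-1) := hEm
          _ ≤ (((a:ℝ)+1) * ((a.choose m:ℝ) * K^m)) * T^(r-1) :=
              mul_le_mul_of_nonneg_right hstar' (by positivity)
          _ = T^(r-1) * (((a:ℝ)+1) * ((a.choose q:ℝ) * K^m)) := by rw [hchoose_eq]; ring
      have hEmpos : (0:ℝ) < E^m := pow_pos hE0 m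
      calc (1:ℝ) = E^m / E^m := (div_self (ne_of_gt hEmpos)).symm
        _ ≤ (T^(r-1) * (((a:ℝ)+1) * ((a.choose q:ℝ) * K^m))) / E^m := by gcongr
        _ = T^(r-1) * (((a:ℝ)+1) * ((a.choose q:ℝ) * (K^m / E^m))) := by ring
        _ = T^(r-1) * (((a:ℝ)+1) * ((a.choose q:ℝ) * x^m)) := by rw [hxm]
    have hP0 : (0:ℝ) < (a.choose q:ℝ) * x^m :=
      mul_pos (by linarith) (pow_pos hx0 m)
    have hfin : ((F.filter (fun A => A.card = a)).card : ℝ) * ((a.choose q:ℝ) * x^m)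
        ≤ (T^(r+1) * ((a:ℝ)+1) * (1+x)^n) * ((a.choose q:ℝ) * x^m) := by
      calc ((F.filter (fun A => A.card = a)).card : ℝ) * ((a.choose q:ℝ) * x^m)
          ≤ T^2 * (1+x)^n := hA
        _ = (T^2 * (1+x)^n) * 1 := by ring
        _ ≤ (T^2 * (1+x)^n) * (T^(r-1) * (((a:ℝ)+1) * ((a.choose q:ℝ) * x^m))) :=
            mul_le_mul_of_nonneg_left hB (by positivity)
        _ = (T^2 * T^(r-1)) * ((a:ℝ)+1) * (1+x)^n * ((a.choose q:ℝ) * x^m) := by ring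
        _ = (T^(r+1) * ((a:ℝ)+1) * (1+x)^n) * ((a.choose q:ℝ) * x^m) := by
            rw [← pow_add, show 2 + (r-1) = r+1 by omega]
    have hmain := le_of_mul_le_mul_right hfin hP0
    calc ((F.filter (fun A => A.card = a)).card : ℝ)
        ≤ T^(r+1) * ((a:ℝ)+1) * (1+x)^n := hmain
      _ ≤ T^(r+1) * ((n:ℝ)+1) * (1+x)^n := by
          have haR : (a:ℝ) ≤ (n:ℝ) := by exact_mod_cast ha
          have h1 : (0:ℝ) ≤ T^(r+1) := by positivity
          have h2 : (0:ℝ) ≤ (1+x)^n := by positivity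
          nlinarith
  have hsum : F.card = ∑ a ∈ Finset.range (n+1), (F.filter (fun A => A.card = a)).card :=
    Finset.card_eq_sum_card_fiberwise (fun A _ => Finset.mem_range.mpr (by
      have h1 : A.card ≤ n := by simpa using Finset.card_le_univ A
      omega))
  calc (F.card:ℝ) = ∑ a ∈ Finset.range (n+1), ((F.filter (fun A => A.card = a)).card : ℝ) := by
        rw [hsum]
        push_cast
        rfl
    _ ≤ ∑ _a ∈ Finset.range (n+1), T^(r+1) * ((n:ℝ)+1) * (1+x)^n :=
        Finset.sum_le_sum (fun a haR => hclassR a (by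
          have := Finset.mem_range.mp haR
          omega))
    _ = ((n:ℝ)+1) * (T^(r+1) * ((n:ℝ)+1) * (1+x)^n) := by
        rw [Finset.sum_const, Finset.card_range, nsmul_eq_mul]
        push_cast
        ring
    _ = ((n:ℝ)+1)^2 * T^(r+1) * (1+x)^n := by ring



theorem final_thm (r : ℕ) (hr : 3 ≤ r) :
    ∀ ε : ℝ, 0 < ε → ∃ N : ℕ, ∀ n : ℕ, N ≤ n →
      ∀ F : Finset (Finset (Fin n)), ¬ ContainsOneFocalFamily F r →
        (F.card : ℝ) ≤
          (1 + ((r : ℝ) - 2) / ((r : ℝ) - 1) ^ (((r : ℝ) - 1) / ((r : ℝ) - 2)) + ε) ^ n := by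
  intro ε hε
  set x : ℝ := ((r:ℝ)-2)/((r:ℝ)-1)^(((r:ℝ)-1)/((r:ℝ)-2)) with hxdef
  have hr3 : (3:ℝ) ≤ (r:ℝ) := by exact_mod_cast hr
  have hx0 : 0 < x := div_pos (by linarith) (Real.rpow_pos_of_pos (by linarith) _)
  set C : ℝ := ((r:ℝ)-1)^(r+1) with hCdef
  have hC1 : (1:ℝ) ≤ C := one_le_pow₀ (by linarith)
  set ρ : ℝ := (1 + x + ε)/(1 + x) with hρdef
  have h1x : (0:ℝ) < 1 + x := by linarith
  have hρ1 : 1 < ρ := by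
    rw [hρdef, lt_div_iff₀ h1x]
    linarith
  have htend := tendsto_pow_const_div_const_pow_of_one_lt 2 hρ1
  have hev1 : ∀ᶠ n : ℕ in Filter.atTop, (n:ℝ)^2 / ρ^n < 1/(4*C) :=
    htend.eventually_lt_const (by positivity)
  obtain ⟨N0, hN0⟩ := Filter.eventually_atTop.mp hev1
  refine ⟨max N0 1, fun n hn F hF => ?_⟩
  have hn0 : N0 ≤ n := le_trans (le_max_left _ _) hn
  have hn1 : 1 ≤ n := le_trans (le_max_right _ _) hn
  have hb := main_bound hr hF
  have hρn : ((n:ℝ)+1)^2 * C ≤ ρ^n := by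
    have h2 := hN0 n hn0
    have hρpos : (0:ℝ) < ρ^n := pow_pos (by linarith) n
    have h4C : (0:ℝ) < 4*C := by linarith
    have h3 : (n:ℝ)^2 * (4*C) < 1 * ρ^n := (div_lt_div_iff₀ hρpos h4C).mp h2
    have h4 : ((n:ℝ)+1)^2 ≤ 4*(n:ℝ)^2 := by
      nlinarith [show (1:ℝ) ≤ (n:ℝ) by exact_mod_cast hn1]
    nlinarith
  calc (F.card:ℝ) ≤ ((n:ℝ)+1)^2 * C * (1+x)^n := hb
    _ ≤ ρ^n * (1+x)^n := by
        apply mul_le_mul_of_nonneg_right hρn (by positivity)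
    _ = (ρ * (1+x))^n := (mul_pow ρ (1+x) n).symm
    _ = (1 + x + ε)^n := by
        congr 1
        rw [hρdef]
        field_simp

end OneFocalProof


/-- For every `ε > 0` and all sufficiently large `n`, every family of subsets of `[n]`
containing no 1-focal family of size `r` has cardinality at most
`(1 + (r-2)/(r-1)^((r-1)/(r-2)) + ε)^n`. -/
theorem one_focal_asymptotic_upper_bound (r : ℕ) (hr : 3 ≤ r) :
    ∀ ε : ℝ, 0 < ε → ∃ N : ℕ, ∀ n : ℕ, N ≤ n →
      ∀ F : Finset (Finset (Fin n)), ¬ ContainsOneFocalFamily F r →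
        (F.card : ℝ) ≤
          (1 + ((r : ℝ) - 2) / ((r : ℝ) - 1) ^ (((r : ℝ) - 1) / ((r : ℝ) - 2)) + ε) ^ n :=
  OneFocalProof.final_thm r hr
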